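/- Let X₁, …, X_m be Polish spaces with Borel probability measures μ_i, fix indices i₀ ≠ j in {1, …, m}, let d : X₁ × ⋯ × X_m → ℝ and c_{i₀ j} : X_{i₀} × X_j → ℝ be bounded continuous, and set c(x₁, …, x_m) = c_{i₀ j}(x_{i₀}, x_j) + d(x₁, …, x_m) and c̃(x₁, …, x_m, x_{m+1}) = c_{i₀ j}(x_{i₀}, x_{m+1}) + d(x₁, …, x_m), where x_{m+1} ranges over X_j. Then inf_{P ∈ Γ(μ₁, …, μ_m)} ∫ c dP ≥ inf_{Q ∈ Γ(μ₁, …, μ_m, μ_j)} ∫ c̃ dQ, where Γ(μ₁, …, μ_m, μ_j) is the set of probability measures on X₁ × ⋯ × X_m × X_j with coordinate pushforwards μ₁, …, μ_m, μ_j. That is, the unrolled MMOT with the duplicated marginal (but without the diagonal constraint) provides a lower bound on the original MMOT value. -/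

import Mathlib

open MeasureTheory

/-- (One-step unrolling lower bound, part (b).) With the notation of the
unrolling construction (`c(x) = cij(x i₀, x j) + d₀(x)`,
`c̃(x, x') = cij(x i₀, x') + d₀(x)` with `x'` ranging over `X j`), the unrolled MMOT over
`Γ(μ₁,…,μ_m,μ_j)` (the duplicated marginal, without the diagonal constraint) is a lower
bound for the original MMOT over `Γ(μ₁,…,μ_m)`. -/
theorem stmt13 {m : ℕ} (X : Fin m → Type*)
    [∀ i, TopologicalSpace (X i)] [∀ i, PolishSpace (X i)]
    [∀ i, MeasurableSpace (X i)] [∀ i, BorelSpace (X i)]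
    (μ : (i : Fin m) → Measure (X i)) [∀ i, IsProbabilityMeasure (μ i)]
    (i₀ j : Fin m) (hij : i₀ ≠ j)
    (d₀ : ((i : Fin m) → X i) → ℝ) (hd₀ : Continuous d₀) (hd₀b : ∃ M, ∀ x, |d₀ x| ≤ M)
    (cij : X i₀ → X j → ℝ)
    (hcij : Continuous fun p : X i₀ × X j => cij p.1 p.2)
    (hcijb : ∃ M, ∀ x y, |cij x y| ≤ M) :
    (⨅ P : {P : Measure ((i : Fin m) → X i) //
        IsProbabilityMeasure P ∧ ∀ i, P.map (fun x => x i) = μ i},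
      ∫ x, (cij (x i₀) (x j) + d₀ x) ∂P.1)
    ≥ ⨅ Q : {Q : Measure (((i : Fin m) → X i) × X j) //
        IsProbabilityMeasure Q ∧ (∀ i, Q.map (fun q => q.1 i) = μ i) ∧
        Q.map (fun q => q.2) = μ j},
      ∫ q, (cij (q.1 i₀) q.2 + d₀ q.1) ∂Q.1 := by
  obtain ⟨M, hM⟩ := hd₀b
  obtain ⟨M', hM'⟩ := hcijb
  -- the cost function on the product space
  set f : (((i : Fin m) → X i) × X j) → ℝ := fun q => cij (q.1 i₀) q.2 + d₀ q.1 with hf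
  have hfc : Continuous f := by
    apply Continuous.add
    · exact hcij.comp (((continuous_apply i₀).comp continuous_fst).prodMk continuous_snd)
    · exact hd₀.comp continuous_fst
  have hfb : ∀ q, ‖f q‖ ≤ M' + M := fun q => by
    calc ‖f q‖ ≤ |cij (q.1 i₀) q.2| + |d₀ q.1| := abs_add_le _ _
    _ ≤ M' + M := add_le_add (hM' _ _) (hM _)
  -- lower bound for all integrals in the Q-infimum
  have hbdd : BddBelow (Set.range fun Q : {Q : Measure (((i : Fin m) → X i) × X j) //
        IsProbabilityMeasure Q ∧ (∀ i, Q.map (fun q => q.1 i) = μ i) ∧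
        Q.map (fun q => q.2) = μ j} => ∫ q, f q ∂Q.1) := by
    refine ⟨-(M' + M), ?_⟩
    rintro x ⟨Q, rfl⟩
    have := Q.2.1
    have h := norm_integral_le_of_norm_le_const (μ := Q.1) (C := M' + M)
      (Filter.Eventually.of_forall hfb)
    rw [probReal_univ, mul_one] at h
    have := abs_le.1 (by simpa using h)
    linarith [this.1]
  have hpimarg : ∀ i, (Measure.pi μ).map (fun x => x i) = μ i := fun i => by
    ext s hs
    rw [Measure.map_apply (measurable_pi_apply i) hs]
    have : (fun x : (i' : Fin m) → X i' => x i) ⁻¹' s =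
        Set.pi Set.univ (Function.update (fun _ => Set.univ) i s) := Set.eval_preimage
    rw [this, Measure.pi_pi,
      Finset.prod_eq_single i
        (fun b _ hb => by rw [Function.update_of_ne hb]; exact measure_univ)
        (fun h => absurd (Finset.mem_univ i) h)]
    simp
  have : Nonempty {P : Measure ((i : Fin m) → X i) //
      IsProbabilityMeasure P ∧ ∀ i, P.map (fun x => x i) = μ i} :=
    ⟨⟨Measure.pi μ, inferInstance, hpimarg⟩⟩
  refine le_ciInf fun P => ?_
  obtain ⟨hPprob, hPmarg⟩ := P.2
  have hmeas : Measurable (fun x : (i : Fin m) → X i => (x, x j)) :=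
    measurable_id.prodMk (measurable_pi_apply j)
  set Q : Measure (((i : Fin m) → X i) × X j) := P.1.map (fun x => (x, x j)) with hQ
  have hQprob : IsProbabilityMeasure Q := Measure.isProbabilityMeasure_map hmeas.aemeasurable
  have hQmarg : ∀ i, Q.map (fun q => q.1 i) = μ i := fun i => by
    have h1 : Measurable fun q : ((i' : Fin m) → X i') × X j => q.1 i :=
      (measurable_pi_apply i).comp measurable_fst
    rw [hQ, Measure.map_map h1 hmeas]
    exact hPmarg i
  have hQj : Q.map (fun q => q.2) = μ j := by
    have h2 : Measurable fun q : ((i' : Fin m) → X i') × X j => q.2 := measurable_snd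
    rw [hQ, Measure.map_map h2 hmeas]
    exact hPmarg j
  have hint : ∫ q, f q ∂Q = ∫ x, (cij (x i₀) (x j) + d₀ x) ∂P.1 := by
    rw [hQ, integral_map hmeas.aemeasurable hfc.aestronglyMeasurable]
  exact ciInf_le_of_le hbdd ⟨Q, hQprob, hQmarg, hQj⟩ (le_of_eq hint)
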